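/- Let p, q, q' be real numbers with 0 < p < 1/2 and 1 - p ≤ q' < q ≤ 1. Then increasing grade accuracy increases the false positive rate and decreases the false negative rate of a strategic school, with bounded effect on the former: FPR_s(p,q') ≤ FPR_s(p,q) ≤ (1/(1-p))·FPR_s(p,q'), and FNR_s(p,q) ≤ FNR_s(p,q'). -/

import Mathlib

/-- The strategic school's false positive rate. -/
noncomputable def FPR_s (p q : ℝ) : ℝ := 1 - q + q * (p + q - 1) / (q - p)

/-- The strategic school's false negative rate. -/
noncomputable def FNR_s (p q : ℝ) : ℝ := (1 - q) * (1 - 2 * p) / (q - p)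

lemma FPR_s_eq (p q : ℝ) (h : q - p ≠ 0) : FPR_s p q = p * (2 * q - 1) / (q - p) := by
  unfold FPR_s
  field_simp
  ring

/-- Increasing grade accuracy increases the FPR (by a factor of at most 1/(1-p))
and decreases the FNR of a strategic school. -/
theorem accuracy_effect_on_strategic_rates (p q q' : ℝ) (hp0 : 0 < p) (hp : p < 1/2)
    (hq'1 : 1 - p ≤ q') (hq' : q' < q) (hq2 : q ≤ 1) :
    (FPR_s p q' ≤ FPR_s p q ∧ FPR_s p q ≤ (1 / (1 - p)) * FPR_s p q') ∧
    FNR_s p q ≤ FNR_s p q' := by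
  have hqp' : 0 < q' - p := by linarith
  have hqp : 0 < q - p := by linarith
  have h1p : 0 < 1 - p := by linarith
  rw [FPR_s_eq p q (ne_of_gt hqp), FPR_s_eq p q' (ne_of_gt hqp'), FNR_s, FNR_s]
  refine ⟨⟨?_, ?_⟩, ?_⟩
  · rw [div_le_div_iff₀ hqp' hqp]
    nlinarith [mul_nonneg hp0.le (mul_nonneg (by linarith : (0:ℝ) ≤ q - q') (by linarith : (0:ℝ) ≤ 1 - 2*p))]
  · rw [one_div, show (1-p)⁻¹ * (p*(2*q'-1)/(q'-p)) = p*(2*q'-1)/((q'-p)*(1-p)) by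
        rw [eq_div_iff (by positivity)]; field_simp,
      div_le_div_iff₀ hqp (by positivity : (0:ℝ) < (q' - p) * (1 - p))]
    nlinarith [mul_nonneg (by nlinarith : (0:ℝ) ≤ (1 - q) * (1 - 2*p)) hqp'.le,
      mul_nonneg (by linarith : (0:ℝ) ≤ q' - 1 + p) hqp.le,
      mul_pos hqp hqp', hp0.le]
  · rw [div_le_div_iff₀ hqp hqp']
    nlinarith [mul_nonneg (by linarith : (0:ℝ) ≤ 1 - 2*p) (mul_nonneg (by linarith : (0:ℝ) ≤ q - q') h1p.le)]
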